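/- Let d : S × A → ℝ be nonnegative and satisfy the Bellman flow constraint ∑_{a'} d(s',a') = (1−γ) p₀(s') + γ ∑_{s,a} d(s,a) T(s'|s,a) for all s' ∈ S. Define a stationary Markov policy π by π(a|s) := d(s,a)/∑_{a'} d(s,a') whenever ∑_{a'} d(s,a') > 0, and π(a|s) := 1/|A| otherwise. Then d(s,a) = d̄^π(s) · π(a|s) for all (s,a) ∈ S × A; in particular, every nonnegative solution of the Bellman flow constraint is the discounted state–action occupancy of a stationary Markov policy, and its state marginal equals d̄^π. -/

import Mathlib

open scoped BigOperators

/-- The set of stationary Markov policies. -/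
def policySet (S A : Type*) [Fintype A] : Set (S → A → ℝ) :=
  {π | (∀ s a, 0 ≤ π s a) ∧ ∀ s, ∑ a, π s a = 1}

/-- The transition matrix induced by a policy: `P_π(s,s') = ∑_a π(a|s) T(s'|s,a)`. -/
noncomputable def Pmat {S A : Type*} [Fintype A] (T : S → A → S → ℝ)
    (π : S → A → ℝ) : Matrix S S ℝ :=
  fun s s' => ∑ a, π s a * T s a s'

/-- The discounted state occupancy `d̄^π = (1−γ) ∑_t γ^t (P_πᵀ)^t p₀`. -/
noncomputable def dbar {S A : Type*} [Fintype S] [DecidableEq S] [Fintype A]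
    (γ : ℝ) (p0 : S → ℝ) (T : S → A → S → ℝ) (π : S → A → ℝ) (s : S) : ℝ :=
  (1 - γ) * ∑' t : ℕ, γ ^ t * ((Pmat T π).transpose ^ t).mulVec p0 s

/-- Shannon entropy of a state distribution, with the convention `0 · log 0 = 0`
(automatic since `Real.log 0 = 0`). -/
noncomputable def stateEntropy {S : Type*} [Fintype S] (d : S → ℝ) : ℝ :=
  ∑ s, -(d s * Real.log (d s))

open scoped Classical

theorem stmt16 {S A : Type*} [Fintype S] [DecidableEq S] [Fintype A]
    [Nonempty S] [Nonempty A]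
    (γ : ℝ) (hγ : γ ∈ Set.Ioo (0:ℝ) 1)
    (p0 : S → ℝ) (hp0 : ∀ s, 0 ≤ p0 s) (hp0sum : ∑ s, p0 s = 1)
    (T : S → A → S → ℝ) (hT : ∀ s a s', 0 ≤ T s a s')
    (hTsum : ∀ s a, ∑ s', T s a s' = 1)
    (d : S → A → ℝ) (hd : ∀ s a, 0 ≤ d s a)
    (hflow : ∀ s', ∑ a', d s' a'
        = (1 - γ) * p0 s' + γ * ∑ s, ∑ a, d s a * T s a s')
    (π : S → A → ℝ)
    (hπdef : ∀ s a, π s a =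
        if 0 < ∑ a', d s a' then d s a / ∑ a', d s a' else 1 / (Fintype.card A)) :
    (∀ s a, d s a = dbar γ p0 T π s * π s a) ∧
      ∀ s, ∑ a, d s a = dbar γ p0 T π s := by
  obtain ⟨hγ0, hγ1⟩ := hγ
  set P : Matrix S S ℝ := Pmat T π with hP
  set ρ : S → ℝ := fun s => ∑ a, d s a with hρ
  have hρ0 : ∀ s, 0 ≤ ρ s := fun s => Finset.sum_nonneg fun a _ => hd s a
  -- π is a policy
  have hπ0 : ∀ s a, 0 ≤ π s a := by
    intro s a; rw [hπdef]
    split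
    · exact div_nonneg (hd s a) (le_of_lt ‹_›)
    · positivity
  have hπ1 : ∀ s, ∑ a, π s a = 1 := by
    intro s
    by_cases h : 0 < ∑ a', d s a'
    · simp only [hπdef, if_pos h]
      rw [← Finset.sum_div, div_self (ne_of_gt h)]
    · simp only [hπdef, if_neg h]
      rw [Finset.sum_const, nsmul_eq_mul]
      have hcard : (0:ℝ) < (Fintype.card A : ℝ) := by
        exact_mod_cast Fintype.card_pos
      field_simp
      simp
  -- factorization d = ρ π
  have hfac : ∀ s a, d s a = ρ s * π s a := by
    intro s a
    rcases (hρ0 s).lt_or_eq with h | h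
    · rw [hπdef, if_pos h, mul_div_cancel₀ _ (ne_of_gt h)]
    · have hz : d s a = 0 := by
        have := (Finset.sum_eq_zero_iff_of_nonneg (fun a _ => hd s a)).mp h.symm
        exact this a (Finset.mem_univ a)
      rw [hz, ← h, zero_mul]
  -- P properties
  have hP0 : ∀ s s', 0 ≤ P s s' := by
    intro s s'
    exact Finset.sum_nonneg fun a _ => mul_nonneg (hπ0 s a) (hT s a s')
  have hP1 : ∀ s, ∑ s', P s s' = 1 := by
    intro s
    rw [hP]
    simp only [Pmat]
    rw [Finset.sum_comm]
    calc ∑ a, ∑ s', π s a * T s a s' = ∑ a, π s a * ∑ s', T s a s' := by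
          simp [Finset.mul_sum]
      _ = 1 := by simp [hTsum, hπ1 s]
  -- fixed point equation for ρ
  have hfix : ∀ s', ρ s' = (1 - γ) * p0 s' + γ * ∑ s, P s s' * ρ s := by
    intro s'
    have key : ∑ s, ∑ a, d s a * T s a s' = ∑ s, P s s' * ρ s := by
      refine Finset.sum_congr rfl fun s _ => ?_
      have h5 : ∀ a, d s a * T s a s' = ρ s * (π s a * T s a s') := by
        intro a; rw [hfac s a]; ring
      rw [Finset.sum_congr rfl fun a _ => h5 a, ← Finset.mul_sum]
      rw [hP]; simp only [Pmat]; ring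
    calc ρ s' = (1 - γ) * p0 s' + γ * ∑ s, ∑ a, d s a * T s a s' := hflow s'
      _ = (1 - γ) * p0 s' + γ * ∑ s, P s s' * ρ s := by rw [key]
  -- q t := (Pᵀ)^t p0 is a probability vector
  set q : ℕ → S → ℝ := fun t => (P.transpose ^ t).mulVec p0 with hq
  have hqstep : ∀ t s', q (t+1) s' = ∑ s, P s s' * q t s := by
    intro t s'
    rw [hq]
    simp only [pow_succ', ← Matrix.mulVec_mulVec]
    simp [Matrix.mulVec, Matrix.transpose_apply, dotProduct]
  have hqprob : ∀ t, (∀ s, 0 ≤ q t s) ∧ ∑ s, q t s = 1 := by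
    intro t
    induction t with
    | zero =>
      constructor
      · intro s; simp only [hq, pow_zero, Matrix.one_mulVec]
        exact hp0 s
      · simp only [hq, pow_zero, Matrix.one_mulVec]
        exact hp0sum
    | succ t ih =>
      constructor
      · intro s'
        rw [hqstep]
        exact Finset.sum_nonneg fun s _ => mul_nonneg (hP0 s s') (ih.1 s)
      · calc ∑ s', q (t+1) s' = ∑ s', ∑ s, P s s' * q t s := by
              exact Finset.sum_congr rfl fun s' _ => hqstep t s'
          _ = ∑ s, (∑ s', P s s') * q t s := by
              rw [Finset.sum_comm]; simp [Finset.sum_mul]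
          _ = 1 := by simp [hP1, ih.2]
  have hqle : ∀ t s, q t s ≤ 1 := by
    intro t s
    have h := (hqprob t).2
    calc q t s ≤ ∑ s', q t s' :=
          Finset.single_le_sum (fun s' _ => (hqprob t).1 s') (Finset.mem_univ s)
      _ = 1 := h
  -- summability
  have hsum : ∀ s, Summable (fun t : ℕ => γ ^ t * q t s) := by
    intro s
    refine Summable.of_nonneg_of_le (fun t => mul_nonneg (pow_nonneg hγ0.le t) ((hqprob t).1 s)) (fun t => ?_) (summable_geometric_of_lt_one hγ0.le hγ1)
    calc γ ^ t * q t s ≤ γ ^ t * 1 := by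
          exact mul_le_mul_of_nonneg_left (hqle t s) (pow_nonneg hγ0.le t)
      _ = γ ^ t := mul_one _
  -- dbar fixed point
  have hdbar : ∀ s, dbar γ p0 T π s = (1 - γ) * ∑' t : ℕ, γ ^ t * q t s := by
    intro s; rfl
  have hdfix : ∀ s', dbar γ p0 T π s' = (1 - γ) * p0 s' + γ * ∑ s, P s s' * dbar γ p0 T π s := by
    intro s'
    have h1 : ∑' t : ℕ, γ ^ t * q t s' = q 0 s' + ∑' t : ℕ, γ ^ (t+1) * q (t+1) s' := by
      rw [Summable.tsum_eq_zero_add (hsum s')]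
      simp
    have h2 : ∑' t : ℕ, γ ^ (t+1) * q (t+1) s' = γ * ∑' t : ℕ, γ ^ t * (∑ s, P s s' * q t s) := by
      rw [← tsum_mul_left]
      refine tsum_congr fun t => ?_
      rw [hqstep t s']; ring
    have h3 : ∑' t : ℕ, γ ^ t * (∑ s, P s s' * q t s) = ∑ s, P s s' * ∑' t : ℕ, γ ^ t * q t s := by
      calc ∑' t : ℕ, γ ^ t * (∑ s, P s s' * q t s)
          = ∑' t : ℕ, ∑ s, P s s' * (γ ^ t * q t s) := by
            refine tsum_congr fun t => ?_
            rw [Finset.mul_sum]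
            refine Finset.sum_congr rfl fun s _ => by ring
        _ = ∑ s, ∑' t : ℕ, P s s' * (γ ^ t * q t s) :=
            Summable.tsum_finsetSum (fun s _ => ((hsum s).mul_left (P s s')))
        _ = ∑ s, P s s' * ∑' t : ℕ, γ ^ t * q t s :=
            Finset.sum_congr rfl fun s _ => tsum_mul_left
    have hq0 : q 0 s' = p0 s' := by
      simp only [hq, pow_zero, Matrix.one_mulVec]
    rw [hdbar s', h1, h2, h3, hq0]
    have hrhs : ∑ s, P s s' * dbar γ p0 T π s
        = (1 - γ) * ∑ s, P s s' * ∑' t : ℕ, γ ^ t * q t s := by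
      rw [Finset.mul_sum]
      refine Finset.sum_congr rfl fun s _ => by rw [hdbar s]; ring
    rw [hrhs]
    ring
  -- uniqueness: e = ρ - dbar satisfies e = γ Pᵀ e, hence e = 0 in ℓ1
  set e : S → ℝ := fun s => ρ s - dbar γ p0 T π s with he
  have hefix : ∀ s', e s' = γ * ∑ s, P s s' * e s := by
    intro s'
    show ρ s' - dbar γ p0 T π s' = γ * ∑ s, P s s' * (ρ s - dbar γ p0 T π s)
    rw [hfix s', hdfix s']
    have hsplit : ∑ s, P s s' * (ρ s - dbar γ p0 T π s)
        = ∑ s, P s s' * ρ s - ∑ s, P s s' * dbar γ p0 T π s := by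
      rw [← Finset.sum_sub_distrib]
      exact Finset.sum_congr rfl fun s _ => by ring
    rw [hsplit]
    ring
  have hezero : ∀ s, e s = 0 := by
    have hbound : ∑ s, |e s| ≤ γ * ∑ s, |e s| := by
      calc ∑ s', |e s'| = ∑ s', γ * |∑ s, P s s' * e s| := by
            refine Finset.sum_congr rfl fun s' _ => ?_
            rw [hefix s', abs_mul, abs_of_nonneg hγ0.le]
        _ ≤ ∑ s', γ * ∑ s, P s s' * |e s| := by
            refine Finset.sum_le_sum fun s' _ => ?_
            refine mul_le_mul_of_nonneg_left ?_ hγ0.le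
            calc |∑ s, P s s' * e s| ≤ ∑ s, |P s s' * e s| := Finset.abs_sum_le_sum_abs _ _
              _ = ∑ s, P s s' * |e s| := by
                  refine Finset.sum_congr rfl fun s _ => ?_
                  rw [abs_mul, abs_of_nonneg (hP0 s s')]
        _ = γ * ∑ s, (∑ s', P s s') * |e s| := by
            rw [← Finset.mul_sum, Finset.sum_comm]
            simp [Finset.sum_mul]
        _ = γ * ∑ s, |e s| := by simp [hP1]
    have hnn : 0 ≤ ∑ s, |e s| := Finset.sum_nonneg fun s _ => abs_nonneg _
    have : ∑ s, |e s| = 0 := by nlinarith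
    intro s
    have := (Finset.sum_eq_zero_iff_of_nonneg (fun s _ => abs_nonneg (e s))).mp this s (Finset.mem_univ s)
    exact abs_eq_zero.mp this
  have hρdbar : ∀ s, ρ s = dbar γ p0 T π s := by
    intro s
    have h : ρ s - dbar γ p0 T π s = 0 := hezero s
    linarith
  constructor
  · intro s a
    rw [hfac s a, hρdbar s]
  · intro s
    rw [← hρdbar s]
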